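/- Let f : ℝⁿ × ℝ^q → ℝⁿ be continuous, let [x⋆, x̄⋆] ⊆ ℝⁿ and [w, w̄] ⊆ ℝ^q be intervals, and let F^min be the minimal inclusion function of f, i.e., (F^min_low(a,b,w,w̄))_i = inf {f_i(x,w) : x ∈ [a,b], w ∈ [w,w̄]} and (F^min_up(a,b,w,w̄))_i = sup {f_i(x,w) : x ∈ [a,b], w ∈ [w,w̄]}. If there exists an index i such that either (F^min_low(x⋆, x̄⋆_{i:x⋆}, w, w̄))_i < 0 or (F^min_up(x⋆_{i:x̄⋆}, x̄⋆, w, w̄))_i > 0, then [x⋆, x̄⋆] is not [w,w̄]-robustly forward invariant: there exists a constant disturbance w ∈ [w,w̄], a C¹ curve x : [0,T] → ℝⁿ with x'(t) = f(x(t), w), x(0) ∈ [x⋆, x̄⋆], and a time t ∈ (0,T] with x(t) ∉ [x⋆, x̄⋆]. -/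

import Mathlib

set_option maxHeartbeats 1000000
set_option synthInstance.maxHeartbeats 400000

open Set

section AuxiliaryPeano
open Filter MeasureTheory intervalIntegral BoundedContinuousFunction


/-- Lipschitz approximation of a bounded uniformly continuous function, via inf-convolution. -/
lemma lip_approx {n : ℕ} (g : (Fin n → ℝ) → (Fin n → ℝ)) (hg : UniformContinuous g)
    (C : ℝ) (hC : ∀ z, ‖g z‖ ≤ C) {ε : ℝ} (hε : 0 < ε) :
    ∃ (L : NNReal) (G : (Fin n → ℝ) → (Fin n → ℝ)), LipschitzWith L G ∧ (∀ z, ‖G z‖ ≤ C) ∧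
      ∀ z, ‖G z - g z‖ ≤ ε := by
  obtain ⟨δ, hδ0, hδ⟩ := Metric.uniformContinuous_iff.mp hg ε hε
  have hC0 : 0 ≤ C := le_trans (norm_nonneg _) (hC 0)
  obtain ⟨k, hk0, hkδ⟩ : ∃ k : ℝ, 0 < k ∧ 2*C ≤ k*δ := by
    refine ⟨2*C/δ + 1, by positivity, ?_⟩
    have h1 : (2*C/δ) * δ = 2*C := div_mul_cancel₀ _ (ne_of_gt hδ0)
    have h2 : (2*C/δ + 1)*δ = (2*C/δ) * δ + δ := by ring
    linarith
  have hcomp : ∀ y j, |g y j| ≤ C := by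
    intro y j
    have := norm_le_pi_norm (g y) j
    rw [Real.norm_eq_abs] at this
    exact this.trans (hC y)
  set G : (Fin n → ℝ) → (Fin n → ℝ) :=
    fun z j => sInf (Set.range fun y => g y j + k * dist z y) with hGdef
  have hne : ∀ z j, (Set.range fun y => g y j + k * dist z y).Nonempty :=
    fun z j => ⟨_, ⟨z, rfl⟩⟩
  have hbd : ∀ z j, ∀ v ∈ (Set.range fun y => g y j + k * dist z y), -C ≤ v := by
    rintro z j v ⟨y, rfl⟩
    have h1 := (abs_le.mp (hcomp y j)).1
    have h2 : 0 ≤ k * dist z y := mul_nonneg hk0.le dist_nonneg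
    dsimp only
    linarith
  have hbdd : ∀ z j, BddBelow (Set.range fun y => g y j + k * dist z y) :=
    fun z j => ⟨-C, hbd z j⟩
  have hle : ∀ z j, G z j ≤ g z j := by
    intro z j
    have : g z j + k * dist z z ∈ (Set.range fun y => g y j + k * dist z y) := ⟨z, rfl⟩
    have h := csInf_le (hbdd z j) this
    simpa using h
  have hgeC : ∀ z j, -C ≤ G z j := fun z j => le_csInf (hne z j) (hbd z j)
  have hge : ∀ z j, g z j - ε ≤ G z j := by
    intro z j
    refine le_csInf (hne z j) ?_
    rintro v ⟨y, rfl⟩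
    dsimp only
    rcases lt_or_ge (dist z y) δ with h | h
    · have hd := hδ h
      have hj : dist (g z j) (g y j) ≤ dist (g z) (g y) := dist_le_pi_dist _ _ j
      rw [Real.dist_eq] at hj
      have : |g z j - g y j| < ε := lt_of_le_of_lt hj hd
      have h2 : 0 ≤ k * dist z y := mul_nonneg hk0.le dist_nonneg
      have := (abs_lt.mp this).2
      linarith
    · have h1 : k * δ ≤ k * dist z y := mul_le_mul_of_nonneg_left h hk0.le
      have h2 := (abs_le.mp (hcomp y j)).1
      have h3 := (abs_le.mp (hcomp z j)).2
      linarith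
  have honeside : ∀ z z' j, G z j ≤ G z' j + k * dist z z' := by
    intro z z' j
    rw [← sub_le_iff_le_add]
    refine le_csInf (hne z' j) ?_
    rintro v ⟨y, rfl⟩
    have h1 : G z j ≤ g y j + k * dist z y := csInf_le (hbdd z j) ⟨y, rfl⟩
    have h2 : dist z y ≤ dist z z' + dist z' y := dist_triangle _ _ _
    have h3 : k * dist z y ≤ k * (dist z z' + dist z' y) := mul_le_mul_of_nonneg_left h2 hk0.le
    dsimp only
    linarith
  refine ⟨⟨k, hk0.le⟩, G, ?_, ?_, ?_⟩
  · refine LipschitzWith.of_dist_le_mul fun z z' => ?_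
    show dist (G z) (G z') ≤ k * dist z z'
    rw [dist_pi_le_iff (mul_nonneg hk0.le dist_nonneg)]
    intro j
    rw [Real.dist_eq, abs_le]
    constructor
    · have := honeside z' z j
      rw [dist_comm z' z] at this
      linarith
    · have := honeside z z' j
      linarith
  · intro z
    rw [pi_norm_le_iff_of_nonneg hC0]
    intro j
    rw [Real.norm_eq_abs, abs_le]
    exact ⟨hgeC z j, le_trans (hle z j) (abs_le.mp (hcomp z j)).2⟩
  · intro z
    rw [pi_norm_le_iff_of_nonneg hε.le]
    intro j
    rw [Pi.sub_apply, Real.norm_eq_abs, abs_le]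
    constructor
    · linarith [hge z j]
    · linarith [hle z j, hε]

/-- If the derivative at `0` is negative, the function dips below its initial value. -/
lemma exit_lemma {u : ℝ → ℝ} {c : ℝ} (hu : HasDerivAt u c 0) (hc : c < 0) {T : ℝ} (hT : 0 < T) :
    ∃ t ∈ Set.Ioc (0:ℝ) T, u t < u 0 := by
  have hs := hasDerivAt_iff_tendsto_slope.mp hu
  have hmono : nhdsWithin (0:ℝ) (Set.Ioi 0) ≤ nhdsWithin (0:ℝ) {(0:ℝ)}ᶜ :=
    nhdsWithin_mono _ (fun x hx => ne_of_gt hx)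
  have hev : ∀ᶠ t in nhdsWithin (0:ℝ) (Set.Ioi 0), slope u 0 t < 0 :=
    (hs.mono_left hmono).eventually_lt_const hc
  have hmem : Set.Ioc (0:ℝ) T ∈ nhdsWithin (0:ℝ) (Set.Ioi 0) :=
    Ioc_mem_nhdsGT_of_mem ⟨le_refl 0, hT⟩
  obtain ⟨t, hts, htm⟩ := (hev.and (Filter.eventually_of_mem hmem fun x hx => hx)).exists
  refine ⟨t, htm, ?_⟩
  have h0 : slope u 0 t = (u t - u 0) / t := by rw [slope_def_field]; rw [sub_zero]
  rw [h0] at hts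
  have ht0 : 0 < t := htm.1
  rcases div_neg_iff.mp hts with ⟨h1, h2⟩ | ⟨h1, h2⟩
  · linarith
  · linarith

/-- Peano existence theorem (local, for continuous autonomous vector field on `ℝⁿ`). -/
lemma peano {n : ℕ} (F : (Fin n → ℝ) → (Fin n → ℝ)) (hF : Continuous F) (x₀ : Fin n → ℝ) :
    ∃ T : ℝ, 0 < T ∧ ∃ y : ℝ → Fin n → ℝ, y 0 = x₀ ∧
      ∀ t ∈ Set.Icc (0:ℝ) T, HasDerivAt y (F (y t)) t := by
  classical
  -- clamping onto the box [x₀ - 1, x₀ + 1]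
  set al : Fin n → ℝ := fun j => x₀ j - 1 with hal
  set au : Fin n → ℝ := fun j => x₀ j + 1 with hau
  set proj : (Fin n → ℝ) → (Fin n → ℝ) := fun z j => max (al j) (min (au j) (z j)) with hprojdef
  have halau : ∀ j, al j ≤ au j := fun j => by simp [hal, hau]; linarith
  have hproj_mem : ∀ z, proj z ∈ Set.Icc al au := by
    intro z
    constructor
    · intro j; exact le_max_left _ _
    · intro j; exact max_le (halau j) (min_le_left _ _)
  have hproj_id : ∀ z ∈ Set.Icc al au, proj z = z := by
    intro z hz
    funext j
    have h1 : min (au j) (z j) = z j := min_eq_right (hz.2 j)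
    rw [hprojdef]; dsimp only; rw [h1]; exact max_eq_right (hz.1 j)
  have hproj_lip : ∀ a b, dist (proj a) (proj b) ≤ dist a b := by
    intro a b
    rw [dist_pi_le_iff dist_nonneg]
    intro j
    have h1 : dist (proj a j) (proj b j) ≤ dist (a j) (b j) := by
      simp only [hprojdef, Real.dist_eq]
      calc |max (al j) (min (au j) (a j)) - max (al j) (min (au j) (b j))|
          = |max (min (au j) (a j)) (al j) - max (min (au j) (b j)) (al j)| := by
            rw [max_comm (al j), max_comm (al j)]
        _ ≤ |min (au j) (a j) - min (au j) (b j)| := abs_max_sub_max_le_abs _ _ _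
        _ ≤ max |au j - au j| |a j - b j| := abs_min_sub_min_le_max _ _ _ _
        _ = |a j - b j| := by simp
    exact h1.trans (dist_le_pi_dist a b j)
  -- the globally bounded, uniformly continuous field g
  have hKc : IsCompact (Set.Icc al au) := isCompact_Icc
  obtain ⟨C0, hC0⟩ := hKc.exists_bound_of_continuousOn hF.continuousOn
  set C : ℝ := max C0 0 with hCdef
  have hC0' : 0 ≤ C := le_max_right _ _
  set g : (Fin n → ℝ) → (Fin n → ℝ) := fun z => F (proj z) with hgdef
  have hgC : ∀ z, ‖g z‖ ≤ C := fun z => le_trans (hC0 _ (hproj_mem z)) (le_max_left _ _)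
  have hgUC : UniformContinuous g := by
    have h1 : UniformContinuousOn F (Set.Icc al au) :=
      hKc.uniformContinuousOn_of_continuous hF.continuousOn
    rw [Metric.uniformContinuous_iff]
    intro ε hε
    obtain ⟨δ, hδ0, hδ⟩ := Metric.uniformContinuousOn_iff.mp h1 ε hε
    exact ⟨δ, hδ0, fun {a b} hab =>
      hδ _ (hproj_mem a) _ (hproj_mem b) (lt_of_le_of_lt (hproj_lip a b) hab)⟩
  have hgcont : Continuous g := hgUC.continuous
  -- the time horizon
  set T : ℝ := 1 / (C + 1) with hTdef
  have hT : 0 < T := by positivity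
  have hCT : C * T < 1 := by
    rw [hTdef, mul_one_div]
    rw [div_lt_one (by linarith)]
    linarith
  -- Lipschitz approximations
  have happrox : ∀ m : ℕ, ∃ (L : NNReal) (G : (Fin n → ℝ) → (Fin n → ℝ)),
      LipschitzWith L G ∧ (∀ z, ‖G z‖ ≤ C) ∧ ∀ z, ‖G z - g z‖ ≤ 1/((m:ℝ)+1) :=
    fun m => lip_approx g hgUC C hgC (by positivity)
  choose L G hGlip hGC hGerr using happrox
  -- approximate solutions via Picard–Lindelöf
  have hsol : ∀ m : ℕ, ∃ α : ℝ → Fin n → ℝ, α 0 = x₀ ∧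
      ∀ t ∈ Set.Icc (0:ℝ) T, HasDerivWithinAt α (G m (α t)) (Set.Icc (0:ℝ) T) t := by
    intro m
    have hpl : IsPicardLindelof (fun _ z => G m z) (tmin := 0) (tmax := T)
        ⟨0, ⟨le_refl 0, hT.le⟩⟩ x₀ ⟨C*T+1, by positivity⟩ 0 ⟨C, hC0'⟩ (L m) :=
      IsPicardLindelof.of_time_independent (fun x _ => hGC m x) (hGlip m).lipschitzOnWith (by
        show C * max (T - 0) (0 - 0) ≤ C*T+1 - 0
        rw [sub_zero, sub_self, sub_zero, max_eq_left hT.le]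
        linarith)
    obtain ⟨α, hα0, hαd⟩ := hpl.exists_eq_forall_mem_Icc_hasDerivWithinAt₀
    exact ⟨α, hα0, hαd⟩
  choose α hα0 hαderiv using hsol
  have hαcont : ∀ m, ContinuousOn (α m) (Set.Icc (0:ℝ) T) :=
    fun m t ht => (hαderiv m t ht).continuousWithinAt
  -- integral identities
  have hint : ∀ m, ∀ t ∈ Set.Icc (0:ℝ) T,
      IntervalIntegrable (fun s => G m (α m s)) volume 0 t := by
    intro m t ht
    apply ContinuousOn.intervalIntegrable
    rw [uIcc_of_le ht.1]
    exact (hGlip m).continuous.comp_continuousOn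
      ((hαcont m).mono (Set.Icc_subset_Icc le_rfl ht.2))
  have hieq : ∀ m, ∀ t ∈ Set.Icc (0:ℝ) T,
      α m t = x₀ + ∫ s in (0:ℝ)..t, G m (α m s) := by
    intro m t ht
    have h2 : (∫ s in (0:ℝ)..t, G m (α m s)) = α m t - α m 0 := by
      refine intervalIntegral.integral_eq_sub_of_hasDeriv_right_of_le ht.1
        ((hαcont m).mono (Set.Icc_subset_Icc le_rfl ht.2)) (fun s hs => ?_) (hint m t ht)
      have hsT : s ∈ Set.Icc (0:ℝ) T := ⟨hs.1.le, (hs.2.trans_le ht.2).le⟩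
      exact ((hαderiv m s hsT).hasDerivAt
        (Icc_mem_nhds hs.1 (hs.2.trans_le ht.2))).hasDerivWithinAt
    rw [h2, hα0]
    abel
  -- uniform Lipschitz bound for the curves
  have hdiff : ∀ m, ∀ s ∈ Set.Icc (0:ℝ) T, ∀ t ∈ Set.Icc (0:ℝ) T,
      ‖α m t - α m s‖ ≤ C * |t - s| := by
    intro m s hs t ht
    have h3 : α m t - α m s = ∫ u in s..t, G m (α m u) := by
      have h1 := hieq m t ht
      have h2 := hieq m s hs
      rw [h1, h2, add_sub_add_left_eq_sub]
      exact intervalIntegral.integral_interval_sub_left (hint m t ht) (hint m s hs)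
    rw [h3]
    exact intervalIntegral.norm_integral_le_of_norm_le_const (fun u _ => hGC m _)
  have hball : ∀ m, ∀ t ∈ Set.Icc (0:ℝ) T, ‖α m t - x₀‖ ≤ C * T := by
    intro m t ht
    have h := hdiff m 0 ⟨le_rfl, hT.le⟩ t ht
    rw [hα0] at h
    refine h.trans ?_
    have : |t - 0| ≤ T := by rw [sub_zero, abs_of_nonneg ht.1]; exact ht.2
    exact mul_le_mul_of_nonneg_left this hC0'
  -- package the curves as bounded continuous functions on [0, T]
  set Fb : ℕ → BoundedContinuousFunction (Set.Icc (0:ℝ) T) (Fin n → ℝ) :=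
    fun m => BoundedContinuousFunction.mkOfCompact ⟨fun τ => α m τ, (hαcont m).restrict⟩
    with hFbdef
  have hFbapp : ∀ m τ, Fb m τ = α m τ := fun m τ => rfl
  set sball : Set (Fin n → ℝ) := Metric.closedBall x₀ (C*T) with hsball
  have hscomp : IsCompact sball := isCompact_closedBall _ _
  set A : Set (BoundedContinuousFunction (Set.Icc (0:ℝ) T) (Fin n → ℝ)) :=
    {h | (∀ τ σ, dist (h τ) (h σ) ≤ C * dist τ σ) ∧ ∀ τ, h τ ∈ sball} with hAdef
  have hmemA : ∀ m, Fb m ∈ A := by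
    intro m
    constructor
    · intro τ σ
      rw [hFbapp, hFbapp, dist_eq_norm, Subtype.dist_eq, Real.dist_eq]
      exact hdiff m σ σ.2 τ τ.2
    · intro τ
      rw [hFbapp, Metric.mem_closedBall, dist_eq_norm]
      exact hball m τ τ.2
  have hequi : Equicontinuous (fun x : A => ((x : BoundedContinuousFunction _ _) :
      Set.Icc (0:ℝ) T → Fin n → ℝ)) := by
    intro τ₀
    rw [Metric.equicontinuousAt_iff]
    intro ε hε
    refine ⟨ε/(C+1), by positivity, fun τ hτ x => ?_⟩
    refine lt_of_le_of_lt (x.2.1 τ₀ τ) ?_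
    have h2 : dist τ₀ τ < ε/(C+1) := by rw [dist_comm]; exact hτ
    have h3 : C * dist τ₀ τ ≤ C * (ε/(C+1)) :=
      mul_le_mul_of_nonneg_left h2.le hC0'
    have h4 : C * (ε/(C+1)) < ε := by
      rw [mul_div_assoc']
      rw [div_lt_iff₀ (by linarith)]
      nlinarith
    exact lt_of_le_of_lt h3 h4
  have hclos := BoundedContinuousFunction.arzela_ascoli sball hscomp A
    (fun h τ hA => hA.2 τ) hequi
  obtain ⟨Fi, _, φ, hφmono, hφtend⟩ :=
    hclos.tendsto_subseq (fun m => subset_closure (hmemA m))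
  have hdist0 : Tendsto (fun m => dist (Fb (φ m)) Fi) atTop (nhds 0) := by
    have := tendsto_iff_dist_tendsto_zero.mp hφtend
    simpa [Function.comp] using this
  -- the limit curve
  set xt : ℝ → Fin n → ℝ := fun t => Fi (Set.projIcc 0 T hT.le t) with hxtdef
  have hxtcont : Continuous xt := Fi.continuous.comp continuous_projIcc
  have hxteq : ∀ t (ht : t ∈ Set.Icc (0:ℝ) T), xt t = Fi ⟨t, ht⟩ := by
    intro t ht
    rw [hxtdef]
    dsimp only
    rw [Set.projIcc_of_mem hT.le ht]
  have hgxtcont : Continuous (fun s => g (xt s)) := hgcont.comp hxtcont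
  -- passing to the limit in the integral equation
  have hkey : ∀ t ∈ Set.Icc (0:ℝ) T, xt t = x₀ + ∫ s in (0:ℝ)..t, g (xt s) := by
    intro t ht
    have hgint : IntervalIntegrable (fun s => g (xt s)) volume 0 t :=
      hgxtcont.intervalIntegrable _ _
    have hmain : ∀ ε > (0:ℝ), ‖xt t - (x₀ + ∫ s in (0:ℝ)..t, g (xt s))‖ ≤ ε * (1 + 2*T) := by
      intro ε hε
      obtain ⟨δ, hδ0, hδ⟩ := Metric.uniformContinuous_iff.mp hgUC ε hε
      have hev1 : ∀ᶠ m in atTop, dist (Fb (φ m)) Fi < min δ ε :=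
        hdist0.eventually_lt_const (lt_min hδ0 hε)
      have hev2 : ∀ᶠ m in atTop, 1/((φ m : ℝ)+1) ≤ ε := by
        obtain ⟨N, hN⟩ := exists_nat_one_div_lt hε
        rw [Filter.eventually_atTop]
        refine ⟨N, fun m hm => ?_⟩
        have h1 : (N:ℝ) + 1 ≤ (φ m : ℝ) + 1 := by
          have : (N:ℝ) ≤ (φ m : ℝ) := by
            exact_mod_cast hm.trans (hφmono.le_apply)
          linarith
        have h2 : 1/((φ m:ℝ)+1) ≤ 1/((N:ℝ)+1) :=
          one_div_le_one_div_of_le (by positivity) h1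
        exact h2.trans hN.le
      obtain ⟨m, hm1, hm2⟩ := (hev1.and hev2).exists
      have hα_int : IntervalIntegrable (fun s => G (φ m) (α (φ m) s)) volume 0 t :=
        hint (φ m) t ht
      have heq1 : α (φ m) t = x₀ + ∫ s in (0:ℝ)..t, G (φ m) (α (φ m) s) := hieq (φ m) t ht
      have hpt : ∀ s ∈ Set.uIoc (0:ℝ) t, ‖G (φ m) (α (φ m) s) - g (xt s)‖ ≤ 2*ε := by
        intro s hs
        rw [Set.uIoc_of_le ht.1] at hs
        have hsI : s ∈ Set.Icc (0:ℝ) T := ⟨hs.1.le, hs.2.trans ht.2⟩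
        have h1 : ‖G (φ m) (α (φ m) s) - g (α (φ m) s)‖ ≤ ε := (hGerr (φ m) _).trans hm2
        have h2 : dist (α (φ m) s) (xt s) < δ := by
          rw [hxteq s hsI]
          calc dist (α (φ m) s) (Fi ⟨s, hsI⟩)
              = dist (Fb (φ m) ⟨s, hsI⟩) (Fi ⟨s, hsI⟩) := by rw [hFbapp]
            _ ≤ dist (Fb (φ m)) Fi := BoundedContinuousFunction.dist_coe_le_dist _
            _ < min δ ε := hm1
            _ ≤ δ := min_le_left _ _
        have h3 : ‖g (α (φ m) s) - g (xt s)‖ < ε := by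
          rw [← dist_eq_norm]
          exact hδ h2
        calc ‖G (φ m) (α (φ m) s) - g (xt s)‖
            = ‖(G (φ m) (α (φ m) s) - g (α (φ m) s)) + (g (α (φ m) s) - g (xt s))‖ := by
              rw [sub_add_sub_cancel]
          _ ≤ ‖G (φ m) (α (φ m) s) - g (α (φ m) s)‖ + ‖g (α (φ m) s) - g (xt s)‖ :=
              norm_add_le _ _
          _ ≤ 2*ε := by linarith
      have hibound : ‖(∫ s in (0:ℝ)..t, G (φ m) (α (φ m) s)) - ∫ s in (0:ℝ)..t, g (xt s)‖
          ≤ 2*ε*T := by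
        rw [← intervalIntegral.integral_sub hα_int hgint]
        refine (intervalIntegral.norm_integral_le_of_norm_le_const hpt).trans ?_
        have : |t - 0| ≤ T := by rw [sub_zero, abs_of_nonneg ht.1]; exact ht.2
        exact mul_le_mul_of_nonneg_left this (by linarith)
      have hxtα : ‖xt t - α (φ m) t‖ ≤ ε := by
        rw [hxteq t ht, ← dist_eq_norm]
        calc dist (Fi ⟨t, ht⟩) (α (φ m) t) = dist (Fi ⟨t, ht⟩) (Fb (φ m) ⟨t, ht⟩) := by
              rw [hFbapp]
          _ = dist (Fb (φ m) ⟨t, ht⟩) (Fi ⟨t, ht⟩) := dist_comm _ _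
          _ ≤ dist (Fb (φ m)) Fi := BoundedContinuousFunction.dist_coe_le_dist _
          _ ≤ ε := hm1.le.trans (min_le_right _ _)
      calc ‖xt t - (x₀ + ∫ s in (0:ℝ)..t, g (xt s))‖
          = ‖(xt t - α (φ m) t) + (α (φ m) t - (x₀ + ∫ s in (0:ℝ)..t, g (xt s)))‖ := by
            rw [sub_add_sub_cancel]
        _ ≤ ‖xt t - α (φ m) t‖ + ‖α (φ m) t - (x₀ + ∫ s in (0:ℝ)..t, g (xt s))‖ :=
            norm_add_le _ _
        _ ≤ ε + 2*ε*T := by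
            refine add_le_add hxtα ?_
            rw [heq1, add_sub_add_left_eq_sub]
            exact hibound
        _ = ε * (1 + 2*T) := by ring
    have hD : ‖xt t - (x₀ + ∫ s in (0:ℝ)..t, g (xt s))‖ ≤ 0 := by
      by_contra hpos
      push_neg at hpos
      have h2T : (0:ℝ) < 1 + 2*T := by linarith
      set D := ‖xt t - (x₀ + ∫ s in (0:ℝ)..t, g (xt s))‖ with hDdef
      have hm := hmain (D/(2*(1+2*T))) (by positivity)
      have heq : D/(2*(1+2*T)) * (1+2*T) = D/2 := by field_simp
      rw [heq] at hm
      linarith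
    have := norm_le_zero_iff.mp hD
    exact sub_eq_zero.mp this
  -- the solution
  set y : ℝ → Fin n → ℝ := fun t => x₀ + ∫ s in (0:ℝ)..t, g (xt s) with hydef
  have hyder : ∀ t : ℝ, HasDerivAt y (g (xt t)) t := by
    intro t
    exact ((hgxtcont.integral_hasStrictDerivAt 0 t).hasDerivAt).const_add x₀
  have hy0 : y 0 = x₀ := by
    rw [hydef]
    simp
  refine ⟨T, hT, y, hy0, ?_⟩
  intro t ht
  have hyx : y t = xt t := (hkey t ht).symm
  have hb : ‖y t - x₀‖ ≤ C * T := by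
    rw [hydef]
    dsimp only
    rw [add_sub_cancel_left]
    refine (intervalIntegral.norm_integral_le_of_norm_le_const
      (fun s _ => hgC (xt s))).trans ?_
    have : |t - 0| ≤ T := by rw [sub_zero, abs_of_nonneg ht.1]; exact ht.2
    exact mul_le_mul_of_nonneg_left this hC0'
  have hbox : y t ∈ Set.Icc al au := by
    constructor
    · intro j
      have hj := norm_le_pi_norm (y t - x₀) j
      rw [Real.norm_eq_abs, Pi.sub_apply] at hj
      have := (abs_le.mp (hj.trans hb)).1
      simp only [hal]
      linarith
    · intro j
      have hj := norm_le_pi_norm (y t - x₀) j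
      rw [Real.norm_eq_abs, Pi.sub_apply] at hj
      have := (abs_le.mp (hj.trans hb)).2
      simp only [hau]
      linarith
  have hgy : g (xt t) = F (y t) := by
    rw [← hyx, hgdef]
    dsimp only
    rw [hproj_id _ hbox]
  rw [← hgy]
  exact hyder t

end AuxiliaryPeano

/-- If the minimal inclusion function of a continuous `f`, evaluated on some
face of the hyper-rectangle `[xl⋆, xu⋆]`, points strictly out of the rectangle, then the
rectangle is not `[wl,wu]`-robustly forward invariant: some solution with a constant
disturbance starts in the rectangle and leaves it. -/
theorem not_forward_invariant_of_minimal_violation {n q : ℕ}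
    (f : (Fin n → ℝ) → (Fin q → ℝ) → (Fin n → ℝ))
    (hf_cont : Continuous fun p : (Fin n → ℝ) × (Fin q → ℝ) => f p.1 p.2)
    (xl xu : Fin n → ℝ) (hx : xl ≤ xu)
    (wl wu : Fin q → ℝ) (hw : wl ≤ wu)
    (i : Fin n)
    (hviol :
      sInf ((fun p : (Fin n → ℝ) × (Fin q → ℝ) => f p.1 p.2 i) ''
          (Icc xl (Function.update xu i (xl i)) ×ˢ Icc wl wu)) < 0 ∨
      0 < sSup ((fun p : (Fin n → ℝ) × (Fin q → ℝ) => f p.1 p.2 i) ''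
          (Icc (Function.update xl i (xu i)) xu ×ˢ Icc wl wu))) :
    ∃ (w : Fin q → ℝ) (T : ℝ) (x : ℝ → Fin n → ℝ),
      w ∈ Icc wl wu ∧ 0 < T ∧
      (∀ t ∈ Icc (0:ℝ) T, HasDerivAt x (f (x t) w) t) ∧
      x 0 ∈ Icc xl xu ∧ ∃ t ∈ Ioc (0:ℝ) T, x t ∉ Icc xl xu := by
  classical
  rcases hviol with hlow | hup
  · -- low case: exit through the lower face at coordinate i
    have hex : ∃ pw : (Fin n → ℝ) × (Fin q → ℝ),
        pw ∈ Icc xl (Function.update xu i (xl i)) ×ˢ Icc wl wu ∧ f pw.1 pw.2 i < 0 := by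
      by_contra h
      push_neg at h
      have h0 : 0 ≤ sInf ((fun p : (Fin n → ℝ) × (Fin q → ℝ) => f p.1 p.2 i) ''
          (Icc xl (Function.update xu i (xl i)) ×ˢ Icc wl wu)) := by
        apply Real.sInf_nonneg
        rintro v ⟨pw, hpw, rfl⟩
        exact h pw hpw
      linarith
    obtain ⟨⟨p, w₀⟩, hpw, hneg⟩ := hex
    obtain ⟨hp, hw₀⟩ := hpw
    have hpi : p i = xl i := by
      refine le_antisymm ?_ (hp.1 i)
      have := hp.2 i
      simpa using this
    have hpbox : p ∈ Icc xl xu := by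
      refine ⟨hp.1, fun j => le_trans (hp.2 j) ?_⟩
      rcases eq_or_ne j i with rfl | hne
      · simp [hx j]
      · simp [Function.update_apply, hne]
    have hFc : Continuous fun z => f z w₀ :=
      hf_cont.comp (continuous_id.prodMk continuous_const)
    obtain ⟨T₀, hT₀, y, hy0, hyd⟩ := peano (fun z => f z w₀) hFc p
    have hdi : HasDerivAt (fun t => y t i) (f p w₀ i) 0 := by
      have h := (hasDerivAt_pi.mp (hyd 0 ⟨le_rfl, hT₀.le⟩)) i
      rw [hy0] at h
      exact h
    obtain ⟨t, htIoc, hlt⟩ := exit_lemma hdi hneg hT₀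
    refine ⟨w₀, t, y, hw₀, htIoc.1, fun s hs => hyd s ⟨hs.1, hs.2.trans htIoc.2⟩,
      by rw [hy0]; exact hpbox, t, ⟨htIoc.1, le_rfl⟩, ?_⟩
    intro hmem
    have h1 := hmem.1 i
    rw [hy0, hpi] at hlt
    exact absurd h1 (not_le.mpr hlt)
  · -- high case: exit through the upper face at coordinate i
    have hex : ∃ pw : (Fin n → ℝ) × (Fin q → ℝ),
        pw ∈ Icc (Function.update xl i (xu i)) xu ×ˢ Icc wl wu ∧ 0 < f pw.1 pw.2 i := by
      by_contra h
      push_neg at h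
      have h0 : sSup ((fun p : (Fin n → ℝ) × (Fin q → ℝ) => f p.1 p.2 i) ''
          (Icc (Function.update xl i (xu i)) xu ×ˢ Icc wl wu)) ≤ 0 := by
        apply Real.sSup_nonpos
        rintro v ⟨pw, hpw, rfl⟩
        exact h pw hpw
      linarith
    obtain ⟨⟨p, w₀⟩, hpw, hpos⟩ := hex
    obtain ⟨hp, hw₀⟩ := hpw
    have hpi : p i = xu i := by
      refine le_antisymm (hp.2 i) ?_
      have := hp.1 i
      simpa using this
    have hpbox : p ∈ Icc xl xu := by
      refine ⟨fun j => le_trans ?_ (hp.1 j), hp.2⟩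
      rcases eq_or_ne j i with rfl | hne
      · simp [hx j]
      · simp [Function.update_apply, hne]
    have hFc : Continuous fun z => f z w₀ :=
      hf_cont.comp (continuous_id.prodMk continuous_const)
    obtain ⟨T₀, hT₀, y, hy0, hyd⟩ := peano (fun z => f z w₀) hFc p
    have hdi : HasDerivAt (fun t => y t i) (f p w₀ i) 0 := by
      have h := (hasDerivAt_pi.mp (hyd 0 ⟨le_rfl, hT₀.le⟩)) i
      rw [hy0] at h
      exact h
    obtain ⟨t, htIoc, hlt⟩ := exit_lemma hdi.neg (neg_neg_iff_pos.mpr hpos) hT₀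
    refine ⟨w₀, t, y, hw₀, htIoc.1, fun s hs => hyd s ⟨hs.1, hs.2.trans htIoc.2⟩,
      by rw [hy0]; exact hpbox, t, ⟨htIoc.1, le_rfl⟩, ?_⟩
    intro hmem
    have h1 := hmem.2 i
    have hlt' : xu i < y t i := by
      have : -(y t i) < -(y 0 i) := hlt
      rw [hy0, hpi] at this
      linarith
    exact absurd h1 (not_le.mpr hlt')
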